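/- Unweighted bound for sparse forms: let 1 ≤ p₀ < p < q₀ ≤ ∞ and let 𝒮 be an η-sparse collection of dyadic cubes. Then Σ_{Q∈𝒮} ⟨f⟩_{p₀,Q} ⟨g⟩_{q₀',Q} |Q| ≤ η^{-1} ((p/p₀)')^{1/p₀} ((p'/q₀')')^{1/q₀'} ‖f‖_{L^p} ‖g‖_{L^{p'}} for all f ∈ L^p, g ∈ L^{p'}. -/

import Mathlib

open MeasureTheory
open scoped ENNReal

/-- The `L^t` average `⟨f⟩_{t,Q}` over `Q` (w.r.t. `μ`), with the `esssup` interpretation for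
`t = ∞`. -/
noncomputable def eAvg {α : Type*} [MeasurableSpace α] (μ : Measure α) (Q : Set α)
    (t : ℝ≥0∞) (f : α → ℝ≥0∞) : ℝ≥0∞ :=
  if t = ∞ then essSup f (μ.restrict Q)
  else ((μ Q)⁻¹ * ∫⁻ x in Q, f x ^ t.toReal ∂μ) ^ (t.toReal)⁻¹

/-- The conjugate exponent `t' = t/(t−1)`. -/
noncomputable def conjR (t : ℝ) : ℝ := t / (t - 1)

section SparseAux
open Set
variable {α : Type*} [MeasurableSpace α]

/-- average of h over Q -/
noncomputable def avg (μ : Measure α) (Q : Set α) (h : α → ℝ≥0∞) : ℝ≥0∞ :=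
  (μ Q)⁻¹ * ∫⁻ x in Q, h x ∂μ

/-- dyadic maximal function over a collection 𝒜 -/
noncomputable def MD (μ : Measure α) (𝒜 : Set (Set α)) (h : α → ℝ≥0∞) (x : α) : ℝ≥0∞ :=
  ⨆ Q ∈ 𝒜, Set.indicator Q (fun _ => avg μ Q h) x

lemma MD_measurable (μ : Measure α) {𝒜 : Set (Set α)} (hc : 𝒜.Countable)
    (hm : ∀ Q ∈ 𝒜, MeasurableSet Q) (h : α → ℝ≥0∞) : Measurable (MD μ 𝒜 h) := by
  have : MD μ 𝒜 h = fun x => ⨆ Q : 𝒜, Set.indicator (Q : Set α) (fun _ => avg μ Q h) x := by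
    funext x; rw [MD, iSup_subtype]
  rw [this]
  have := hc.to_subtype
  exact Measurable.iSup fun Q => Measurable.indicator measurable_const (hm Q Q.2)

lemma le_MD {μ : Measure α} {𝒜 : Set (Set α)} {Q : Set α} (hQ : Q ∈ 𝒜) {x : α} (hx : x ∈ Q)
    (h : α → ℝ≥0∞) : avg μ Q h ≤ MD μ 𝒜 h x := by
  have : avg μ Q h = Set.indicator Q (fun _ => avg μ Q h) x := by
    rw [Set.indicator_of_mem hx]
  rw [this]
  exact le_iSup₂ (f := fun Q _ => Set.indicator Q (fun _ => avg μ Q h) x) Q hQ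

lemma MD_mono {μ : Measure α} {𝒜 ℬ : Set (Set α)} (hab : 𝒜 ⊆ ℬ) (h : α → ℝ≥0∞) (x : α) :
    MD μ 𝒜 h x ≤ MD μ ℬ h x :=
  iSup₂_le fun Q hQ => le_iSup₂ (f := fun Q _ => Set.indicator Q (fun _ => avg μ Q h) x) Q (hab hQ)

lemma MD_lt_iff {μ : Measure α} {𝒜 : Set (Set α)} {h : α → ℝ≥0∞} {x : α} {T : ℝ≥0∞}
    (hT : 0 < T) : T < MD μ 𝒜 h x ↔ ∃ Q ∈ 𝒜, x ∈ Q ∧ T < avg μ Q h := by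
  rw [MD, lt_iSup_iff]
  constructor
  · rintro ⟨Q, hlt⟩
    rw [lt_iSup_iff] at hlt
    obtain ⟨hQ, hlt⟩ := hlt
    by_cases hx : x ∈ Q
    · rw [Set.indicator_of_mem hx] at hlt; exact ⟨Q, hQ, hx, hlt⟩
    · rw [Set.indicator_of_notMem hx] at hlt; exact absurd hlt (not_lt.2 hT.le)
  · rintro ⟨Q, hQ, hx, hlt⟩
    refine ⟨Q, ?_⟩
    rw [lt_iSup_iff]
    exact ⟨hQ, by rwa [Set.indicator_of_mem hx]⟩

lemma MD_eq_zero_of_not_mem {μ : Measure α} {𝒜 : Set (Set α)} {h : α → ℝ≥0∞} {x : α}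
    (hx : ∀ Q ∈ 𝒜, x ∉ Q) : MD μ 𝒜 h x = 0 := by
  rw [MD]
  refine le_antisymm (iSup₂_le fun Q hQ => ?_) zero_le
  rw [Set.indicator_of_notMem (hx Q hQ)]

/-- For a finite nested family of measurable sets on each of which `T * μ Q ≤ ∫_Q h`,
the same holds on the union. -/
lemma union_weak (μ : Measure α) (h : α → ℝ≥0∞) (T : ℝ≥0∞) :
    ∀ n (G : Finset (Set α)), G.card ≤ n →
    (∀ Q ∈ G, MeasurableSet Q) →
    (∀ Q ∈ G, ∀ Q' ∈ G, Disjoint Q Q' ∨ Q ⊆ Q' ∨ Q' ⊆ Q) →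
    (∀ Q ∈ G, T * μ Q ≤ ∫⁻ x in Q, h x ∂μ) →
    T * μ (⋃ Q ∈ G, Q) ≤ ∫⁻ x in ⋃ Q ∈ G, Q, h x ∂μ := by
  intro n
  induction n with
  | zero =>
    intro G hcard _ _ _
    rw [Finset.card_eq_zero.1 (Nat.le_zero.1 hcard)]
    simp
  | succ n ih =>
    intro G hcard hmG hnG hTG
    rcases G.eq_empty_or_nonempty with rfl | hne
    · simp
    classical
    obtain ⟨Q, hQG, hQmax⟩ := G.exists_maximal hne
    set G' := G.filter (fun Q' => ¬ Q' ⊆ Q) with hG'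
    have hQnotG' : Q ∉ G' := by simp [hG']
    have hG'sub : G' ⊆ G := Finset.filter_subset _ _
    have hdisj : ∀ Q' ∈ G', Disjoint Q Q' := by
      intro Q' hQ'
      have hQ'G : Q' ∈ G := hG'sub hQ'
      have hns : ¬ Q' ⊆ Q := (Finset.mem_filter.1 hQ').2
      rcases hnG Q hQG Q' hQ'G with hd | hsub | hsub'
      · exact hd
      · rcases eq_or_ne Q Q' with rfl | hne'
        · exact absurd subset_rfl hns
        · exact absurd (hQmax hQ'G hsub) hns
      · exact absurd hsub' hns
    have hunion : (⋃ Q' ∈ G, Q') = Q ∪ ⋃ Q' ∈ G', Q' := by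
      apply Set.Subset.antisymm
      · intro x hx
        rw [Set.mem_iUnion₂] at hx
        obtain ⟨Q', hQ', hxQ'⟩ := hx
        by_cases hs : Q' ⊆ Q
        · exact Or.inl (hs hxQ')
        · exact Or.inr (Set.mem_iUnion₂.2 ⟨Q', Finset.mem_filter.2 ⟨hQ', hs⟩, hxQ'⟩)
      · apply Set.union_subset
        · exact Set.subset_iUnion₂ (s := fun Q' (_ : Q' ∈ G) => Q') Q hQG
        · exact Set.iUnion₂_mono' fun Q' hQ' => ⟨Q', hG'sub hQ', subset_rfl⟩
    have hdisjU : Disjoint Q (⋃ Q' ∈ G', Q') := by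
      rw [Set.disjoint_iUnion₂_right]
      exact hdisj
    have hmeasU : MeasurableSet (⋃ Q' ∈ G', Q') :=
      (Finset.measurableSet_biUnion G' (fun Q' hQ' => hmG Q' (hG'sub hQ')))
    have hcard' : G'.card ≤ n := by
      have : G' ⊆ G.erase Q := by
        intro Q' hQ'
        exact Finset.mem_erase.2 ⟨fun he => hQnotG' (he ▸ hQ'), hG'sub hQ'⟩
      calc G'.card ≤ (G.erase Q).card := Finset.card_le_card this
        _ = G.card - 1 := Finset.card_erase_of_mem hQG
        _ ≤ n := by omega
    have ih' := ih G' hcard' (fun Q' hQ' => hmG Q' (hG'sub hQ'))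
      (fun Q1 h1 Q2 h2 => hnG Q1 (hG'sub h1) Q2 (hG'sub h2))
      (fun Q' hQ' => hTG Q' (hG'sub hQ'))
    rw [hunion]
    calc T * μ (Q ∪ ⋃ Q' ∈ G', Q') ≤ T * (μ Q + μ (⋃ Q' ∈ G', Q')) := by
          gcongr; exact measure_union_le _ _
      _ = T * μ Q + T * μ (⋃ Q' ∈ G', Q') := mul_add _ _ _
      _ ≤ (∫⁻ x in Q, h x ∂μ) + ∫⁻ x in ⋃ Q' ∈ G', Q', h x ∂μ := add_le_add (hTG Q hQG) ih'
      _ = ∫⁻ x in Q ∪ ⋃ Q' ∈ G', Q', h x ∂μ := (lintegral_union hmeasU hdisjU).symm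


/-- Hölder for a single cube: the L¹ average is finite when ∫ h^r is finite. -/
lemma avg_lt_top {μ : Measure α} {Q : Set α} (hQ0 : 0 < μ Q) (hQt : μ Q < ∞)
    {h : α → ℝ≥0∞} (hh : Measurable h) {r : ℝ} (hr : 1 < r)
    (hK : ∫⁻ x, h x ^ r ∂μ ≠ ∞) : avg μ Q h < ∞ := by
  have hpq : r.HolderConjugate (r / (r - 1)) := Real.HolderConjugate.conjExponent hr
  have hint : ∫⁻ x in Q, h x ∂μ ≤
      (∫⁻ x in Q, h x ^ r ∂μ) ^ (1 / r) * (μ Q) ^ (1 / (r / (r - 1))) := by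
    have := ENNReal.lintegral_mul_le_Lp_mul_Lq (μ.restrict Q) hpq hh.aemeasurable
      (aemeasurable_const (b := (1 : ℝ≥0∞)))
    simpa using this
  have h1 : (∫⁻ x in Q, h x ^ r ∂μ) ^ (1 / r) < ∞ := by
    refine ENNReal.rpow_lt_top_of_nonneg (by rw [one_div]; exact inv_nonneg.2 (by linarith)) ?_
    exact ne_top_of_le_ne_top hK (setLIntegral_le_lintegral _ _)
  have h2 : (μ Q) ^ (1 / (r / (r - 1))) < ∞ :=
    ENNReal.rpow_lt_top_of_nonneg (le_of_lt (by rw [one_div]; exact inv_pos.2 (div_pos (by linarith) (by linarith)))) hQt.ne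
  have : ∫⁻ x in Q, h x ∂μ < ∞ := lt_of_le_of_lt hint (ENNReal.mul_lt_top h1 h2)
  exact ENNReal.mul_lt_top (ENNReal.inv_lt_top.2 hQ0) this


-- interval integral computations
lemma intervalInt_one (r : ℝ) (hr : 1 < r) (b : ℝ) :
    ∫ t in (0:ℝ)..b, r * t ^ (r - 1) = b ^ r := by
  rw [intervalIntegral.integral_const_mul,
    integral_rpow (Or.inl (by linarith : (-1:ℝ) < r - 1))]
  rw [sub_add_cancel, Real.zero_rpow (by linarith : r ≠ 0), sub_zero]
  field_simp

lemma intervalInt_two (r : ℝ) (hr : 1 < r) (b : ℝ) :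
    ∫ t in (0:ℝ)..b, (r - 1) * t ^ (r - 2) = b ^ (r - 1) := by
  rw [intervalIntegral.integral_const_mul,
    integral_rpow (Or.inl (by linarith : (-1:ℝ) < r - 2))]
  have h2 : r - 2 + 1 = r - 1 := by ring
  rw [h2, Real.zero_rpow (by linarith : r - 1 ≠ 0), sub_zero]
  rw [mul_div_assoc']
  exact mul_div_cancel_left₀ _ (by linarith : r - 1 ≠ 0)

lemma finite_maximal (μ : Measure α) (F : Finset (Set α))
    (hm : ∀ Q ∈ F, MeasurableSet Q)
    (hfin : ∀ Q ∈ F, 0 < μ Q ∧ μ Q < ∞)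
    (hnest : ∀ Q ∈ F, ∀ Q' ∈ F, Disjoint Q Q' ∨ Q ⊆ Q' ∨ Q' ⊆ Q)
    (h : α → ℝ≥0∞) (hh : Measurable h) (r : ℝ) (hr : 1 < r) :
    ∫⁻ x, MD μ ↑F h x ^ r ∂μ ≤
      ENNReal.ofReal (r / (r - 1)) ^ r * ∫⁻ x, h x ^ r ∂μ := by
  classical
  have hr0 : (0:ℝ) < r := by linarith
  have hr1 : (0:ℝ) < r - 1 := by linarith
  have hr' : (0:ℝ) < r / (r - 1) := div_pos hr0 hr1
  set c : ℝ≥0∞ := ENNReal.ofReal (r / (r - 1)) with hc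
  have hc0 : c ≠ 0 := by simp [hc, ENNReal.ofReal_eq_zero, not_le, hr']
  have hct : c ≠ ∞ := ENNReal.ofReal_ne_top
  set K : ℝ≥0∞ := ∫⁻ x, h x ^ r ∂μ with hK
  by_cases hKtop : K = ∞
  · rw [hKtop, ENNReal.mul_top (by simp [hc0, ENNReal.rpow_eq_zero_iff, hr0, hct] : c ^ r ≠ 0)]
    exact le_top
  -- the union and the restricted measure
  set U : Set α := ⋃ Q ∈ F, Q with hU
  have hUm : MeasurableSet U := Finset.measurableSet_biUnion F hm
  have hUfin : μ U < ∞ := by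
    refine lt_of_le_of_lt (measure_biUnion_finset_le F id) ?_
    exact ENNReal.sum_lt_top.2 fun Q hQ => (hfin Q hQ).2
  set ν : Measure α := μ.restrict U with hν
  -- boundedness of the maximal function
  have havgfin : ∀ Q ∈ F, avg μ Q h < ∞ := fun Q hQ =>
    avg_lt_top (hfin Q hQ).1 (hfin Q hQ).2 hh hr hKtop
  set C : ℝ≥0∞ := F.sup (fun Q => avg μ Q h) with hCdef
  have hC : C < ∞ := by
    rcases F.eq_empty_or_nonempty with rfl | hne
    · simp [hCdef]
    · exact (Finset.sup_lt_iff (by simp : (⊥:ℝ≥0∞) < ∞)).2 havgfin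
  have hMDle : ∀ x, MD μ ↑F h x ≤ C := by
    intro x
    refine iSup₂_le fun Q hQ => ?_
    have hQF : Q ∈ F := hQ
    by_cases hx : x ∈ Q
    · rw [Set.indicator_of_mem hx]
      exact Finset.le_sup (f := fun Q => avg μ Q h) hQF
    · rw [Set.indicator_of_notMem hx]; exact zero_le
  have hMDne : ∀ x, MD μ ↑F h x ≠ ∞ := fun x => (lt_of_le_of_lt (hMDle x) hC).ne
  have hMDmeas : Measurable (MD μ ↑F h) :=
    MD_measurable μ F.countable_toSet (fun Q hQ => hm Q hQ) h
  set Fr : α → ℝ := fun x => (MD μ ↑F h x).toReal with hFr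
  have hFrmeas : Measurable Fr := hMDmeas.ennreal_toReal
  have hFrnn : ∀ x, 0 ≤ Fr x := fun x => ENNReal.toReal_nonneg
  have hofFr : ∀ x, ENNReal.ofReal (Fr x) = MD μ ↑F h x := fun x =>
    ENNReal.ofReal_toReal (hMDne x)
  -- the lintegral over μ equals that over ν
  set X : ℝ≥0∞ := ∫⁻ x, MD μ ↑F h x ^ r ∂ν with hX
  have hsupp : (fun x => MD μ ↑F h x ^ r).support ⊆ U := by
    intro x hx
    by_contra hxU
    have hzero : MD μ ↑F h x = 0 := by
      refine MD_eq_zero_of_not_mem fun Q hQ hxQ => hxU ?_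
      exact Set.mem_biUnion hQ hxQ
    apply hx
    simp only [hzero, ENNReal.zero_rpow_of_pos hr0]
  have hXμ : ∫⁻ x, MD μ ↑F h x ^ r ∂μ = X := (setLIntegral_eq_of_support_subset hsupp).symm
  have hXfin : X ≠ ∞ := by
    have : X ≤ C ^ r * ν Set.univ := by
      rw [hX, ← lintegral_const]
      exact lintegral_mono fun x => ENNReal.rpow_le_rpow (hMDle x) hr0.le
    refine (lt_of_le_of_lt this ?_).ne
    refine ENNReal.mul_lt_top (ENNReal.rpow_lt_top_of_nonneg hr0.le hC.ne) ?_
    rwa [hν, Measure.restrict_apply_univ]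
  -- layer cake for X
  have g1_int : ∀ t > (0:ℝ), IntervalIntegrable (fun s => r * s ^ (r-1)) volume 0 t :=
    fun t _ => (intervalIntegral.intervalIntegrable_rpow' (by linarith)).const_mul r
  have g1_nn : ∀ᵐ t ∂(volume.restrict (Set.Ioi (0:ℝ))), 0 ≤ r * t ^ (r-1) := by
    filter_upwards [ae_restrict_mem measurableSet_Ioi] with t ht
    exact mul_nonneg hr0.le (Real.rpow_nonneg (le_of_lt ht) _)
  have layer1 : X = ∫⁻ t in Set.Ioi (0:ℝ), ν {a | t < Fr a} * ENNReal.ofReal (r * t ^ (r-1)) := by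
    have hlc := lintegral_comp_eq_lintegral_meas_lt_mul ν (ae_of_all _ hFrnn)
      hFrmeas.aemeasurable g1_int g1_nn
    rw [hX, ← hlc]
    refine lintegral_congr fun x => ?_
    rw [intervalInt_one r hr (Fr x), ← ENNReal.ofReal_rpow_of_nonneg (hFrnn x) hr0.le, hofFr]
  have hSmeas : ∀ t : ℝ, MeasurableSet {a | t < Fr a} := fun t =>
    measurableSet_lt measurable_const hFrmeas
  set σ : Measure α := ν.withDensity h with hσ
  have weak : ∀ t : ℝ, 0 < t →
      ENNReal.ofReal t * ν {a | t < Fr a} ≤ σ {a | t < Fr a} := by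
    intro t ht
    set S := {a | t < Fr a} with hS
    have hT0 : (0:ℝ≥0∞) < ENNReal.ofReal t := ENNReal.ofReal_pos.2 ht
    set G : Finset (Set α) := F.filter (fun Q => ENNReal.ofReal t < avg μ Q h) with hG
    have hGsub : G ⊆ F := Finset.filter_subset _ _
    have hSeq : S = ⋃ Q ∈ G, Q := by
      ext a
      simp only [hS, Set.mem_setOf_eq, Set.mem_iUnion, exists_prop]
      rw [← ENNReal.ofReal_lt_iff_lt_toReal ht.le (hMDne a), MD_lt_iff hT0]
      constructor
      · rintro ⟨Q, hQ, hx, hlt⟩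
        exact ⟨Q, Finset.mem_filter.2 ⟨hQ, hlt⟩, hx⟩
      · rintro ⟨Q, hQ, hx⟩
        exact ⟨Q, hGsub hQ, hx, (Finset.mem_filter.1 hQ).2⟩
    have hSU : S ⊆ U := by
      rw [hSeq, hU]
      exact Set.iUnion₂_mono' fun Q hQ => ⟨Q, hGsub hQ, subset_rfl⟩
    have hcore : ENNReal.ofReal t * μ S ≤ ∫⁻ a in S, h a ∂μ := by
      rw [hSeq]
      refine union_weak μ h (ENNReal.ofReal t) G.card G le_rfl
        (fun Q hQ => hm Q (hGsub hQ)) (fun Q h1 Q' h2 => hnest Q (hGsub h1) Q' (hGsub h2))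
        (fun Q hQ => ?_)
      have hlt := (Finset.mem_filter.1 hQ).2
      have h0 : μ Q ≠ 0 := (hfin Q (hGsub hQ)).1.ne'
      have htop : μ Q ≠ ∞ := (hfin Q (hGsub hQ)).2.ne
      calc ENNReal.ofReal t * μ Q ≤ avg μ Q h * μ Q := mul_le_mul_left hlt.le _
        _ = ∫⁻ a in Q, h a ∂μ := by
            rw [avg, mul_comm (μ Q)⁻¹, mul_assoc, ENNReal.inv_mul_cancel h0 htop, mul_one]
    have hνS : ν S = μ S := by
      rw [hν, Measure.restrict_apply (hSmeas t), Set.inter_eq_self_of_subset_left hSU]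
    have hσS : σ S = ∫⁻ a in S, h a ∂μ := by
      rw [hσ, withDensity_apply h (hSmeas t), hν, Measure.restrict_restrict (hSmeas t),
        Set.inter_eq_self_of_subset_left hSU]
    rw [hνS, hσS]; exact hcore
  -- pass to the density measure
  have hstep : X ≤ c * ∫⁻ t in Set.Ioi (0:ℝ),
      σ {a | t < Fr a} * ENNReal.ofReal ((r-1) * t ^ (r-2)) := by
    rw [layer1, ← lintegral_const_mul' c _ hct]
    refine lintegral_mono_ae ?_
    filter_upwards [ae_restrict_mem measurableSet_Ioi] with t ht
    have h1 : t ^ (r-1) = t * t ^ (r-2) := by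
      have h2 := Real.rpow_add ht 1 (r-2)
      rw [Real.rpow_one] at h2
      rw [show r-1 = 1+(r-2) by ring, h2]
    have hofid : ENNReal.ofReal (r * t^(r-1)) =
        ENNReal.ofReal t * (c * ENNReal.ofReal ((r-1) * t^(r-2))) := by
      rw [hc, ← ENNReal.ofReal_mul (le_of_lt hr'), ← ENNReal.ofReal_mul ht.le]
      congr 1
      rw [h1]; field_simp
    calc ν {a | t < Fr a} * ENNReal.ofReal (r * t^(r-1))
        = (ENNReal.ofReal t * ν {a | t < Fr a}) * (c * ENNReal.ofReal ((r-1)*t^(r-2))) := by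
          rw [hofid]; ring
      _ ≤ σ {a | t < Fr a} * (c * ENNReal.ofReal ((r-1)*t^(r-2))) :=
          mul_le_mul_left (weak t ht) _
      _ = c * (σ {a | t < Fr a} * ENNReal.ofReal ((r-1)*t^(r-2))) := by ring
  have hMDr1meas : Measurable (fun a => MD μ ↑F h a ^ (r-1)) :=
    (ENNReal.continuous_rpow_const.measurable).comp hMDmeas
  have g2_int : ∀ t > (0:ℝ), IntervalIntegrable (fun s => (r-1) * s ^ (r-2)) volume 0 t :=
    fun t _ => (intervalIntegral.intervalIntegrable_rpow' (by linarith)).const_mul (r-1)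
  have g2_nn : ∀ᵐ t ∂(volume.restrict (Set.Ioi (0:ℝ))), 0 ≤ (r-1) * t ^ (r-2) := by
    filter_upwards [ae_restrict_mem measurableSet_Ioi] with t ht
    exact mul_nonneg hr1.le (Real.rpow_nonneg (le_of_lt ht) _)
  have layer2 : ∫⁻ t in Set.Ioi (0:ℝ), σ {a | t < Fr a} * ENNReal.ofReal ((r-1) * t^(r-2))
      = ∫⁻ a, h a * MD μ ↑F h a ^ (r-1) ∂ν := by
    have hlc2 := lintegral_comp_eq_lintegral_meas_lt_mul σ (ae_of_all _ hFrnn)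
      hFrmeas.aemeasurable g2_int g2_nn
    rw [← hlc2]
    have hcongr : ∀ x, ENNReal.ofReal (∫ t in (0:ℝ)..Fr x, (r-1) * t ^ (r-2))
        = MD μ ↑F h x ^ (r-1) := by
      intro x
      rw [intervalInt_two r hr (Fr x), ← ENNReal.ofReal_rpow_of_nonneg (hFrnn x) hr1.le, hofFr]
    rw [lintegral_congr hcongr, hσ, lintegral_withDensity_eq_lintegral_mul ν hh hMDr1meas]
    rfl
  have hpq : r.HolderConjugate (r/(r-1)) := Real.HolderConjugate.conjExponent hr
  have holder : ∫⁻ a, h a * MD μ ↑F h a ^ (r-1) ∂ν ≤ K ^ (1/r) * X ^ (1/(r/(r-1))) := by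
    have hhold := ENNReal.lintegral_mul_le_Lp_mul_Lq ν hpq hh.aemeasurable
      hMDr1meas.aemeasurable
    simp only [Pi.mul_apply] at hhold
    refine le_trans hhold ?_
    gcongr
    · exact setLIntegral_le_lintegral _ _
    · refine le_of_eq ?_
      rw [hX]
      refine lintegral_congr fun a => ?_
      rw [← ENNReal.rpow_mul]
      congr 1
      field_simp
  have main : X ≤ c * (K ^ (1/r) * X ^ (1/(r/(r-1)))) := by
    calc X ≤ c * ∫⁻ t in Set.Ioi (0:ℝ),
          σ {a | t < Fr a} * ENNReal.ofReal ((r-1) * t ^ (r-2)) := hstep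
      _ = c * ∫⁻ a, h a * MD μ ↑F h a ^ (r-1) ∂ν := by rw [layer2]
      _ ≤ c * (K ^ (1/r) * X ^ (1/(r/(r-1)))) := mul_le_mul_right holder c
  rw [hXμ]
  rcases eq_or_ne X 0 with hX0 | hX0
  · rw [hX0]; exact zero_le
  have hrinv : (0:ℝ) < 1/(r/(r-1)) := hpq.symm.one_div_pos
  have hXr' : X ^ (1/(r/(r-1))) ≠ 0 := by
    simp only [ne_eq, ENNReal.rpow_eq_zero_iff, not_or, not_and, not_lt]
    exact ⟨fun hz => absurd hz hX0, fun hz => absurd hz hXfin⟩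
  have hXr'top : X ^ (1/(r/(r-1))) ≠ ∞ :=
    (ENNReal.rpow_lt_top_of_nonneg hrinv.le (by exact hXfin)).ne
  have hsplit : X ^ (1/r) * X ^ (1/(r/(r-1))) = X := by
    rw [one_div, one_div, ← ENNReal.rpow_add _ _ hX0 hXfin, hpq.inv_add_inv_eq_one,
      ENNReal.rpow_one]
  have hdiv : X ^ (1/r) ≤ c * K ^ (1/r) := by
    have h2 : X ^ (1/r) * X ^ (1/(r/(r-1))) ≤ (c * K ^ (1/r)) * X ^ (1/(r/(r-1))) := by
      rw [hsplit, mul_assoc]; exact main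
    exact (ENNReal.mul_le_mul_iff_left hXr' hXr'top).1 h2
  calc X = (X ^ (1/r)) ^ r := by
        rw [← ENNReal.rpow_mul, one_div, inv_mul_cancel₀ hr0.ne', ENNReal.rpow_one]
    _ ≤ (c * K ^ (1/r)) ^ r := ENNReal.rpow_le_rpow hdiv hr0.le
    _ = c ^ r * K := by
        rw [ENNReal.mul_rpow_of_nonneg _ _ hr0.le, ← ENNReal.rpow_mul, one_div,
          inv_mul_cancel₀ hr0.ne', ENNReal.rpow_one]

lemma maximal_bound (μ : Measure α) (𝒜 : Set (Set α)) (hcA : 𝒜.Countable)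
    (hm : ∀ Q ∈ 𝒜, MeasurableSet Q)
    (hfin : ∀ Q ∈ 𝒜, 0 < μ Q ∧ μ Q < ∞)
    (hnest : ∀ Q ∈ 𝒜, ∀ Q' ∈ 𝒜, Disjoint Q Q' ∨ Q ⊆ Q' ∨ Q' ⊆ Q)
    (h : α → ℝ≥0∞) (hh : Measurable h) (r : ℝ) (hr : 1 < r) :
    ∫⁻ x, MD μ 𝒜 h x ^ r ∂μ ≤
      ENNReal.ofReal (r / (r - 1)) ^ r * ∫⁻ x, h x ^ r ∂μ := by
  classical
  have hr0 : (0:ℝ) < r := by linarith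
  rcases 𝒜.eq_empty_or_nonempty with rfl | hne
  · have : ∀ x, MD μ (∅ : Set (Set α)) h x = 0 := fun x =>
      MD_eq_zero_of_not_mem (fun Q hQ => absurd hQ (Set.notMem_empty Q))
    calc ∫⁻ x, MD μ (∅ : Set (Set α)) h x ^ r ∂μ
        = ∫⁻ _, 0 ∂μ := lintegral_congr fun x => by
          rw [this x, ENNReal.zero_rpow_of_pos hr0]
      _ = 0 := lintegral_zero
      _ ≤ _ := zero_le
  obtain ⟨e, he⟩ := Set.Countable.exists_eq_range hcA hne
  set D : ℕ → Finset (Set α) := fun n => (Finset.range (n+1)).image e with hD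
  have hDsub : ∀ n, ↑(D n) ⊆ 𝒜 := by
    intro n Q hQ
    simp only [hD, Finset.coe_image, Set.mem_image] at hQ
    obtain ⟨i, _, rfl⟩ := hQ
    rw [he]; exact Set.mem_range_self i
  have hDmono : ∀ {n m : ℕ}, n ≤ m → (D n : Set (Set α)) ⊆ ↑(D m) := by
    intro n m hnm
    simp only [hD, Finset.coe_image]
    exact Set.image_mono (f := e) (by intro i hi; simp only [Finset.coe_range, Set.mem_Iio] at *; omega)
  have hmono : ∀ {n m : ℕ}, n ≤ m → ∀ x, MD μ ↑(D n) h x ≤ MD μ ↑(D m) h x :=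
    fun hnm x => MD_mono (hDmono hnm) h x
  have hsup : ∀ x, MD μ 𝒜 h x = ⨆ n, MD μ ↑(D n) h x := by
    intro x
    refine le_antisymm ?_ (iSup_le fun n => MD_mono (hDsub n) h x)
    refine iSup₂_le fun Q hQ => ?_
    rw [he] at hQ
    obtain ⟨i, rfl⟩ := hQ
    have hQi : e i ∈ D i := Finset.mem_image_of_mem e (Finset.mem_range.2 (by omega))
    refine le_trans ?_ (le_iSup _ i)
    by_cases hx : x ∈ e i
    · rw [Set.indicator_of_mem hx]
      exact le_MD (by exact_mod_cast hQi) hx h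
    · rw [Set.indicator_of_notMem hx]; exact zero_le
  have hrw : ∀ x, MD μ 𝒜 h x ^ r = ⨆ n, MD μ ↑(D n) h x ^ r := by
    intro x
    rw [hsup x]
    have Mf : Monotone (fun z : ℝ≥0∞ => z ^ r) := fun a b hab => ENNReal.rpow_le_rpow hab hr0.le
    exact Mf.map_iSup_of_continuousAt ENNReal.continuous_rpow_const.continuousAt
      (by simp [ENNReal.zero_rpow_of_pos hr0])
  calc ∫⁻ x, MD μ 𝒜 h x ^ r ∂μ = ∫⁻ x, ⨆ n, MD μ ↑(D n) h x ^ r ∂μ :=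
        lintegral_congr hrw
    _ = ⨆ n, ∫⁻ x, MD μ ↑(D n) h x ^ r ∂μ := by
        refine lintegral_iSup (fun n => ?_) (fun n m hnm x => ENNReal.rpow_le_rpow
          (hmono hnm x) hr0.le)
        exact (ENNReal.continuous_rpow_const.measurable).comp
          (MD_measurable μ (D n).countable_toSet (fun Q hQ => hm Q (hDsub n hQ)) h)
    _ ≤ ENNReal.ofReal (r / (r - 1)) ^ r * ∫⁻ x, h x ^ r ∂μ := by
        refine iSup_le fun n => finite_maximal μ (D n) (fun Q hQ => hm Q (hDsub n hQ))
          (fun Q hQ => hfin Q (hDsub n hQ))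
          (fun Q h1 Q' h2 => hnest Q (hDsub n h1) Q' (hDsub n h2)) h hh r hr

end SparseAux

/-- Unweighted bound for sparse forms: for `1 ≤ p₀ < p < q₀ ≤ ∞` and an `η`-sparse collection
`𝒮` of dyadic cubes,
`Σ_{Q∈𝒮} ⟨f⟩_{p₀,Q}⟨g⟩_{q₀',Q}|Q| ≤ η⁻¹ ((p/p₀)')^{1/p₀} ((p'/q₀')')^{1/q₀'} ‖f‖_p ‖g‖_{p'}`. -/
theorem stmt_14 {α : Type*} [MeasurableSpace α] (μ : Measure α)
    (𝒟 : Set (Set α)) (hcount : 𝒟.Countable)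
    (hmeas : ∀ Q ∈ 𝒟, MeasurableSet Q)
    (hfin : ∀ Q ∈ 𝒟, 0 < μ Q ∧ μ Q < ⊤)
    (hnest : ∀ Q ∈ 𝒟, ∀ Q' ∈ 𝒟, Disjoint Q Q' ∨ Q ⊆ Q' ∨ Q' ⊆ Q)
    (p₀ p : ℝ) (q₀ : ℝ≥0∞) (hp₀ : 1 ≤ p₀) (hp : p₀ < p) (hq₀ : ENNReal.ofReal p < q₀)
    (q₀' : ℝ) (hq₀' : q₀' = if q₀ = ∞ then 1 else q₀.toReal / (q₀.toReal - 1))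
    (η : ℝ) (hη0 : 0 < η) (hη1 : η ≤ 1)
    (𝒮 : Set (Set α)) (h𝒮 : 𝒮 ⊆ 𝒟)
    (E : Set α → Set α)
    (hEsub : ∀ Q ∈ 𝒮, E Q ⊆ Q)
    (hEmeas : ∀ Q ∈ 𝒮, MeasurableSet (E Q))
    (hEdisj : 𝒮.PairwiseDisjoint E)
    (hEsparse : ∀ Q ∈ 𝒮, μ Q ≤ ENNReal.ofReal η⁻¹ * μ (E Q))
    (f g : α → ℝ≥0∞) (hfm : Measurable f) (hgm : Measurable g) :
    ∑' Q : 𝒮, eAvg μ Q (ENNReal.ofReal p₀) f * eAvg μ Q (ENNReal.ofReal q₀') g * μ Q ≤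
      ENNReal.ofReal
          (η⁻¹ * conjR (p / p₀) ^ (1 / p₀) * conjR (conjR p / q₀') ^ (1 / q₀')) *
        (∫⁻ x, f x ^ p ∂μ) ^ (1 / p) * (∫⁻ x, g x ^ conjR p ∂μ) ^ (1 / conjR p) := by
  classical
  have hp₀0 : (0:ℝ) < p₀ := by linarith
  have hp₀ne : p₀ ≠ 0 := hp₀0.ne'
  have hp1 : (1:ℝ) < p := by linarith
  have hppos : (0:ℝ) < p := by linarith
  have hpne : p ≠ 0 := hppos.ne'
  have hpq' : p.HolderConjugate (conjR p) := by
    have := Real.HolderConjugate.conjExponent hp1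
    simpa [Real.conjExponent, conjR] using this
  have hp'pos : 0 < conjR p := hpq'.symm.pos
  have hp'gt1 : 1 < conjR p := hpq'.symm.lt
  have hq₀'both : 1 ≤ q₀' ∧ q₀' < conjR p := by
    by_cases hq : q₀ = ∞
    · rw [hq₀', if_pos hq]; exact ⟨le_refl 1, hp'gt1⟩
    · rw [hq₀', if_neg hq]
      have hqt : p < q₀.toReal := by
        rw [← ENNReal.ofReal_lt_iff_lt_toReal (by linarith) hq]; exact hq₀
      constructor
      · rw [le_div_iff₀ (by linarith)]; linarith
      · rw [conjR, div_lt_div_iff₀ (by linarith) (by linarith)]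
        nlinarith
  obtain ⟨hq1, hqlt⟩ := hq₀'both
  have hq₀'pos : (0:ℝ) < q₀' := by linarith
  have hq₀'ne : q₀' ≠ 0 := hq₀'pos.ne'
  have hs : 1 < conjR p / q₀' := (one_lt_div hq₀'pos).2 hqlt
  have hr : 1 < p / p₀ := (one_lt_div hp₀0).2 hp
  -- the collection 𝒮 inherits the properties of 𝒟
  have hcS : 𝒮.Countable := hcount.mono h𝒮
  have hmS : ∀ Q ∈ 𝒮, MeasurableSet Q := fun Q hQ => hmeas Q (h𝒮 hQ)
  have hfinS : ∀ Q ∈ 𝒮, 0 < μ Q ∧ μ Q < ∞ := fun Q hQ => hfin Q (h𝒮 hQ)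
  have hnestS : ∀ Q ∈ 𝒮, ∀ Q' ∈ 𝒮, Disjoint Q Q' ∨ Q ⊆ Q' ∨ Q' ⊆ Q :=
    fun Q h1 Q' h2 => hnest Q (h𝒮 h1) Q' (h𝒮 h2)
  set h₁ : α → ℝ≥0∞ := fun x => f x ^ p₀ with hh₁
  set h₂ : α → ℝ≥0∞ := fun x => g x ^ q₀' with hh₂
  have hh₁m : Measurable h₁ := (ENNReal.continuous_rpow_const.measurable).comp hfm
  have hh₂m : Measurable h₂ := (ENNReal.continuous_rpow_const.measurable).comp hgm
  set Mf := MD μ 𝒮 h₁ with hMf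
  set Mg := MD μ 𝒮 h₂ with hMg
  have hMfm : Measurable Mf := MD_measurable μ hcS hmS h₁
  have hMgm : Measurable Mg := MD_measurable μ hcS hmS h₂
  set Φ : α → ℝ≥0∞ := fun x => Mf x ^ p₀⁻¹ * Mg x ^ q₀'⁻¹ with hΦ
  have hΦm : Measurable Φ :=
    ((ENNReal.continuous_rpow_const.measurable).comp hMfm).mul
      ((ENNReal.continuous_rpow_const.measurable).comp hMgm)
  -- termwise bound
  have hterm : ∀ Q : 𝒮,
      eAvg μ Q (ENNReal.ofReal p₀) f * eAvg μ Q (ENNReal.ofReal q₀') g * μ Q ≤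
        ENNReal.ofReal η⁻¹ * ∫⁻ x in E Q, Φ x ∂μ := by
    rintro ⟨Q, hQ⟩
    have heA : eAvg μ Q (ENNReal.ofReal p₀) f = avg μ Q h₁ ^ p₀⁻¹ := by
      rw [eAvg, if_neg ENNReal.ofReal_ne_top, ENNReal.toReal_ofReal hp₀0.le, avg]
    have heB : eAvg μ Q (ENNReal.ofReal q₀') g = avg μ Q h₂ ^ q₀'⁻¹ := by
      rw [eAvg, if_neg ENNReal.ofReal_ne_top, ENNReal.toReal_ofReal hq₀'pos.le, avg]
    have hpoint : ∀ x ∈ E Q, avg μ Q h₁ ^ p₀⁻¹ * avg μ Q h₂ ^ q₀'⁻¹ ≤ Φ x := by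
      intro x hx
      have hxQ : x ∈ Q := hEsub Q hQ hx
      exact mul_le_mul'
        (ENNReal.rpow_le_rpow (le_MD hQ hxQ h₁) (inv_nonneg.2 hp₀0.le))
        (ENNReal.rpow_le_rpow (le_MD hQ hxQ h₂) (inv_nonneg.2 hq₀'pos.le))
    calc eAvg μ Q (ENNReal.ofReal p₀) f * eAvg μ Q (ENNReal.ofReal q₀') g * μ Q
        ≤ eAvg μ Q (ENNReal.ofReal p₀) f * eAvg μ Q (ENNReal.ofReal q₀') g *
            (ENNReal.ofReal η⁻¹ * μ (E Q)) := mul_le_mul_right (hEsparse Q hQ) _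
      _ = ENNReal.ofReal η⁻¹ * ((avg μ Q h₁ ^ p₀⁻¹ * avg μ Q h₂ ^ q₀'⁻¹) * μ (E Q)) := by
          rw [heA, heB]; ring
      _ = ENNReal.ofReal η⁻¹ * ∫⁻ _ in E Q, avg μ Q h₁ ^ p₀⁻¹ * avg μ Q h₂ ^ q₀'⁻¹ ∂μ := by
          rw [setLIntegral_const]
      _ ≤ ENNReal.ofReal η⁻¹ * ∫⁻ x in E Q, Φ x ∂μ :=
          mul_le_mul_right (setLIntegral_mono' (hEmeas Q hQ) hpoint) _
  -- maximal function bounds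
  have hMfb : ∫⁻ x, Mf x ^ (p/p₀) ∂μ ≤
      ENNReal.ofReal (conjR (p/p₀)) ^ (p/p₀) * ∫⁻ x, f x ^ p ∂μ := by
    have hmb := maximal_bound μ 𝒮 hcS hmS hfinS hnestS h₁ hh₁m (p/p₀) hr
    have heq : ∫⁻ x, h₁ x ^ (p/p₀) ∂μ = ∫⁻ x, f x ^ p ∂μ := by
      refine lintegral_congr fun x => ?_
      rw [hh₁, ← ENNReal.rpow_mul]
      congr 1
      field_simp
    rw [heq] at hmb
    simpa [conjR] using hmb
  have hMgb : ∫⁻ x, Mg x ^ (conjR p/q₀') ∂μ ≤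
      ENNReal.ofReal (conjR (conjR p/q₀')) ^ (conjR p/q₀') * ∫⁻ x, g x ^ conjR p ∂μ := by
    have hmb := maximal_bound μ 𝒮 hcS hmS hfinS hnestS h₂ hh₂m (conjR p/q₀') hs
    have heq : ∫⁻ x, h₂ x ^ (conjR p/q₀') ∂μ = ∫⁻ x, g x ^ conjR p ∂μ := by
      refine lintegral_congr fun x => ?_
      rw [hh₂, ← ENNReal.rpow_mul]
      congr 1
      field_simp
    rw [heq] at hmb
    simpa [conjR] using hmb
  set Np := (∫⁻ x, f x ^ p ∂μ) ^ (1/p) with hNp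
  set Nq := (∫⁻ x, g x ^ conjR p ∂μ) ^ (1/conjR p) with hNq
  have hPhi : ∫⁻ x, Φ x ∂μ ≤
      (ENNReal.ofReal (conjR (p/p₀))) ^ (1/p₀) * Np *
        ((ENNReal.ofReal (conjR (conjR p/q₀'))) ^ (1/q₀') * Nq) := by
    have hu : Measurable fun x => Mf x ^ p₀⁻¹ :=
      (ENNReal.continuous_rpow_const.measurable).comp hMfm
    have hv : Measurable fun x => Mg x ^ q₀'⁻¹ :=
      (ENNReal.continuous_rpow_const.measurable).comp hMgm
    have hHold := ENNReal.lintegral_mul_le_Lp_mul_Lq μ hpq' hu.aemeasurable hv.aemeasurable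
    simp only [Pi.mul_apply] at hHold
    have h1eq : ∫⁻ x, (Mf x ^ p₀⁻¹) ^ p ∂μ = ∫⁻ x, Mf x ^ (p/p₀) ∂μ :=
      lintegral_congr fun x => by rw [← ENNReal.rpow_mul, inv_mul_eq_div]
    have h2eq : ∫⁻ x, (Mg x ^ q₀'⁻¹) ^ conjR p ∂μ = ∫⁻ x, Mg x ^ (conjR p/q₀') ∂μ :=
      lintegral_congr fun x => by rw [← ENNReal.rpow_mul, inv_mul_eq_div]
    rw [h1eq, h2eq] at hHold
    refine le_trans hHold (mul_le_mul' ?_ ?_)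
    · calc (∫⁻ x, Mf x ^ (p/p₀) ∂μ) ^ (1/p)
          ≤ (ENNReal.ofReal (conjR (p/p₀)) ^ (p/p₀) * ∫⁻ x, f x ^ p ∂μ) ^ (1/p) :=
            ENNReal.rpow_le_rpow hMfb (one_div_nonneg.2 hppos.le)
        _ = (ENNReal.ofReal (conjR (p/p₀))) ^ (1/p₀) * Np := by
            rw [ENNReal.mul_rpow_of_nonneg _ _ (one_div_nonneg.2 hppos.le),
              ← ENNReal.rpow_mul, hNp]
            congr 2
            field_simp
    · calc (∫⁻ x, Mg x ^ (conjR p/q₀') ∂μ) ^ (1/conjR p)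
          ≤ (ENNReal.ofReal (conjR (conjR p/q₀')) ^ (conjR p/q₀') *
              ∫⁻ x, g x ^ conjR p ∂μ) ^ (1/conjR p) :=
            ENNReal.rpow_le_rpow hMgb (one_div_nonneg.2 hp'pos.le)
        _ = (ENNReal.ofReal (conjR (conjR p/q₀'))) ^ (1/q₀') * Nq := by
            rw [ENNReal.mul_rpow_of_nonneg _ _ (one_div_nonneg.2 hp'pos.le),
              ← ENNReal.rpow_mul, hNq]
            congr 2
            field_simp
  -- summing up
  haveI : Countable ↥𝒮 := hcS.to_subtype
  have hmE : ∀ Q : 𝒮, MeasurableSet (E Q) := fun Q => hEmeas Q Q.2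
  have hdE : Pairwise (Function.onFun Disjoint (fun Q : 𝒮 => E Q)) := by
    intro Q Q' hne
    exact hEdisj Q.2 Q'.2 (fun he => hne (Subtype.ext he))
  have hc1pos : 0 < conjR (p/p₀) := by
    rw [conjR]; exact div_pos (by linarith) (by linarith)
  have hc2pos : 0 < conjR (conjR p/q₀') := by
    rw [conjR]; exact div_pos (by linarith) (by linarith)
  calc ∑' Q : 𝒮, eAvg μ Q (ENNReal.ofReal p₀) f * eAvg μ Q (ENNReal.ofReal q₀') g * μ Q
      ≤ ∑' Q : 𝒮, ENNReal.ofReal η⁻¹ * ∫⁻ x in E Q, Φ x ∂μ := ENNReal.tsum_le_tsum hterm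
    _ = ENNReal.ofReal η⁻¹ * ∑' Q : 𝒮, ∫⁻ x in E Q, Φ x ∂μ := ENNReal.tsum_mul_left
    _ = ENNReal.ofReal η⁻¹ * ∫⁻ x in ⋃ Q : 𝒮, E Q, Φ x ∂μ := by
        rw [lintegral_iUnion hmE hdE]
    _ ≤ ENNReal.ofReal η⁻¹ * ∫⁻ x, Φ x ∂μ :=
        mul_le_mul_right (setLIntegral_le_lintegral _ _) _
    _ ≤ ENNReal.ofReal η⁻¹ * ((ENNReal.ofReal (conjR (p/p₀))) ^ (1/p₀) * Np *
          ((ENNReal.ofReal (conjR (conjR p/q₀'))) ^ (1/q₀') * Nq)) :=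
        mul_le_mul_right hPhi _
    _ = ENNReal.ofReal
          (η⁻¹ * conjR (p / p₀) ^ (1 / p₀) * conjR (conjR p / q₀') ^ (1 / q₀')) * Np * Nq := by
        rw [ENNReal.ofReal_mul (by positivity), ENNReal.ofReal_mul (inv_nonneg.2 hη0.le),
          ENNReal.ofReal_rpow_of_pos hc1pos, ENNReal.ofReal_rpow_of_pos hc2pos]
        ring
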